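/- With the MCAM transition probabilities, the per-step covariance of the increment divided by the holding time converges to σ_w² I as h → 0⁺: lim_{h→0⁺} Cov[Δs | s,θ] / Δt_h(s) = σ_w² I₄ (componentwise, where Δs is the one-step increment random vector), for any fixed s and θ with bounded drift. -/

import Mathlib

open Finset Filter

/-- Standard basis vectors of ℝ⁴. -/
noncomputable def stdBasis (j : Fin 4) : Fin 4 → ℝ := Pi.single j 1

/-- MCAM normalizing constant `Q_h(s) = h·max_θ Σ_j |b_j(s,θ)| + 4σ_w²`. -/
noncomputable def Qh {S Θ : Type*} [Fintype Θ] [Nonempty Θ]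
    (b : S → Θ → Fin 4 → ℝ) (σw h : ℝ) (s : S) : ℝ :=
  h * (Finset.univ.sup' Finset.univ_nonempty (fun θ : Θ => ∑ j : Fin 4, |b s θ j|))
    + 4 * σw ^ 2

/-- MCAM holding time `Δt_h(s) = h²/Q_h(s)`. -/
noncomputable def Δth {S Θ : Type*} [Fintype Θ] [Nonempty Θ]
    (b : S → Θ → Fin 4 → ℝ) (σw h : ℝ) (s : S) : ℝ :=
  h ^ 2 / Qh b σw h s

/-- Probability of moving to `s + h e_j`. -/
noncomputable def Pplus {S Θ : Type*} [Fintype Θ] [Nonempty Θ]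
    (b : S → Θ → Fin 4 → ℝ) (σw h : ℝ) (s : S) (θ : Θ) (j : Fin 4) : ℝ :=
  (σw ^ 2 / 2 + h * max (b s θ j) 0) / Qh b σw h s

/-- Probability of moving to `s - h e_j`. -/
noncomputable def Pminus {S Θ : Type*} [Fintype Θ] [Nonempty Θ]
    (b : S → Θ → Fin 4 → ℝ) (σw h : ℝ) (s : S) (θ : Θ) (j : Fin 4) : ℝ :=
  (σw ^ 2 / 2 + h * max (-(b s θ j)) 0) / Qh b σw h s

/-- Mean of the one-step increment `Δs` (component `i`): `Δs = ±h e_j` with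
probability `P_h(s ± h e_j|s,θ)` and `0` otherwise. -/
noncomputable def meanInc {S Θ : Type*} [Fintype Θ] [Nonempty Θ]
    (b : S → Θ → Fin 4 → ℝ) (σw h : ℝ) (s : S) (θ : Θ) (i : Fin 4) : ℝ :=
  ∑ j : Fin 4, (h * stdBasis j i) * (Pplus b σw h s θ j - Pminus b σw h s θ j)

/-- Second moment `E[Δs Δsᵀ]` (entry `(i,l)`). -/
noncomputable def secondMomentInc {S Θ : Type*} [Fintype Θ] [Nonempty Θ]
    (b : S → Θ → Fin 4 → ℝ) (σw h : ℝ) (s : S) (θ : Θ) (i l : Fin 4) : ℝ :=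
  ∑ j : Fin 4, (h ^ 2 * stdBasis j i * stdBasis j l) * (Pplus b σw h s θ j + Pminus b σw h s θ j)

/-- Covariance `Cov[Δs] = E[Δs Δsᵀ] − E[Δs]E[Δs]ᵀ` (entry `(i,l)`). -/
noncomputable def covInc {S Θ : Type*} [Fintype Θ] [Nonempty Θ]
    (b : S → Θ → Fin 4 → ℝ) (σw h : ℝ) (s : S) (θ : Θ) (i l : Fin 4) : ℝ :=
  secondMomentInc b σw h s θ i l - meanInc b σw h s θ i * meanInc b σw h s θ l

/-- Local consistency of the diffusion: the per-step covariance of the increment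
divided by the holding time converges componentwise to `σ_w² I₄` as `h → 0⁺`. -/
theorem mcam_covariance_limit {S Θ : Type*} [Fintype Θ] [Nonempty Θ]
    (b : S → Θ → Fin 4 → ℝ) (σw : ℝ) (hσ : 0 < σw) (s : S) (θ : Θ) :
    ∀ i l : Fin 4,
      Tendsto (fun h : ℝ => covInc b σw h s θ i l / Δth b σw h s)
        (nhdsWithin 0 (Set.Ioi 0))
        (nhds (σw ^ 2 * (if i = l then (1 : ℝ) else 0))) := by
  intro i l
  set B := b s θ with hB
  have hM0 : 0 ≤ Finset.univ.sup' Finset.univ_nonempty (fun θ' : Θ => ∑ j : Fin 4, |b s θ' j|) := by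
    refine le_trans ?_ (Finset.le_sup' _ (Finset.mem_univ θ))
    positivity
  have hQpos : ∀ h : ℝ, 0 ≤ h → 0 < Qh b σw h s := by
    intro h hh
    unfold Qh
    have : 0 < 4 * σw ^ 2 := by positivity
    nlinarith [mul_nonneg hh hM0]
  have hQcont : Continuous (fun h : ℝ => Qh b σw h s) := by
    unfold Qh; fun_prop
  have hQ0 : Qh b σw 0 s = 4 * σw ^ 2 := by simp [Qh]
  -- eventual equality on Ioi 0
  have key : ∀ h : ℝ, 0 < h →
      covInc b σw h s θ i l / Δth b σw h s =
      (if i = l then σw ^ 2 + h * |B i| else 0)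
        - h ^ 2 * (B i * B l) / Qh b σw h s := by
    intro h hh
    have hQ := hQpos h hh.le
    have hQne : Qh b σw h s ≠ 0 := ne_of_gt hQ
    have hne : h ≠ 0 := ne_of_gt hh
    have hdiff : ∀ j : Fin 4,
        Pplus b σw h s θ j - Pminus b σw h s θ j = h * B j / Qh b σw h s := by
      intro j
      unfold Pplus Pminus
      rw [div_sub_div_same]
      congr 1
      rcases le_total (B j) 0 with hbj | hbj
      · rw [max_eq_right hbj, max_eq_left (by linarith : (0:ℝ) ≤ -B j)]; ring
      · rw [max_eq_left hbj, max_eq_right (by linarith : -B j ≤ 0)]; ring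
    have hsum : ∀ j : Fin 4,
        Pplus b σw h s θ j + Pminus b σw h s θ j
          = (σw ^ 2 + h * |B j|) / Qh b σw h s := by
      intro j
      unfold Pplus Pminus
      rw [← add_div]
      congr 1
      rcases le_total (B j) 0 with hbj | hbj
      · rw [max_eq_right hbj, max_eq_left (by linarith : (0:ℝ) ≤ -B j),
          abs_of_nonpos hbj]; ring
      · rw [max_eq_left hbj, max_eq_right (by linarith : -B j ≤ 0),
          abs_of_nonneg hbj]; ring
    have hmean : ∀ k : Fin 4, meanInc b σw h s θ k = h ^ 2 * B k / Qh b σw h s := by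
      intro k
      unfold meanInc
      rw [Finset.sum_eq_single k]
      · rw [hdiff k]
        simp [stdBasis]
        ring
      · intro j _ hj
        have : stdBasis j k = 0 := Pi.single_eq_of_ne (Ne.symm hj) 1
        rw [this]; ring
      · intro hk; exact absurd (Finset.mem_univ k) hk
    have hsec : secondMomentInc b σw h s θ i l
        = if i = l then h ^ 2 * ((σw ^ 2 + h * |B i|) / Qh b σw h s) else 0 := by
      unfold secondMomentInc
      rw [Finset.sum_eq_single i]
      · rw [hsum i]
        by_cases hil : i = l
        · subst hil; simp [stdBasis]
        · have : stdBasis i l = 0 := Pi.single_eq_of_ne (Ne.symm hil) 1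
          rw [this]; simp [hil]
      · intro j _ hj
        have : stdBasis j i = 0 := Pi.single_eq_of_ne (Ne.symm hj) 1
        rw [this]; ring
      · intro hk; exact absurd (Finset.mem_univ i) hk
    unfold covInc Δth
    rw [hsec, hmean i, hmean l, div_div_eq_mul_div]
    by_cases hil : i = l
    · subst hil
      simp only [eq_self_iff_true, if_true, ↓reduceIte]
      field_simp
    · simp only [if_neg hil]
      field_simp
      ring
  have heq : (fun h : ℝ => covInc b σw h s θ i l / Δth b σw h s)
      =ᶠ[nhdsWithin 0 (Set.Ioi 0)]
      (fun h : ℝ => (if i = l then σw ^ 2 + h * |B i| else 0)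
        - h ^ 2 * (B i * B l) / Qh b σw h s) := by
    filter_upwards [self_mem_nhdsWithin] with h hh
    exact key h hh
  refine Tendsto.congr' heq.symm ?_
  have hlim : Tendsto (fun h : ℝ => (if i = l then σw ^ 2 + h * |B i| else 0)
        - h ^ 2 * (B i * B l) / Qh b σw h s)
      (nhds 0) (nhds (σw ^ 2 * (if i = l then (1 : ℝ) else 0))) := by
    have hcont : ContinuousAt (fun h : ℝ => (if i = l then σw ^ 2 + h * |B i| else 0)
        - h ^ 2 * (B i * B l) / Qh b σw h s) 0 := by
      apply ContinuousAt.sub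
      · by_cases hil : i = l
        · simp only [if_pos hil]; fun_prop
        · simp only [if_neg hil]; fun_prop
      · apply ContinuousAt.div
        · fun_prop
        · exact hQcont.continuousAt
        · rw [hQ0]; positivity
    have := hcont.tendsto
    simp only [hQ0] at this
    convert this using 2
    by_cases hil : i = l <;> simp [hil]
  exact hlim.mono_left nhdsWithin_le_nhds
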